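/- Under the hypotheses that ‖f‖_{B_{p,q₀}} < ∞ for some p ≥ 1 and q₀ > 0, one has liminf_{q→∞} ‖f‖_{B_{p,q}} ≥ ‖f‖_∞ (where both sides may be infinite). -/

import Mathlib

open MeasureTheory Filter Real Topology ENNReal

noncomputable def e0 : ℝ := Real.exp 1 - 1

noncomputable def Bpq (p q t : ℝ) : ℝ := t ^ p * (Real.log (e0 + t)) ^ q

noncomputable def BpqBar (p q t : ℝ) : ℝ := t ^ p * (Real.log (Real.exp 1 + t)) ^ q

/-- The Luxemburg norm of `f` with respect to the Young function `A`. -/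
noncomputable def luxNorm {X : Type*} [MeasurableSpace X] (μ : Measure X)
    (A : ℝ → ℝ) (f : X → ℝ) : ℝ≥0∞ :=
  sInf {lam : ℝ≥0∞ | 0 < lam ∧ lam ≠ ∞ ∧
    ∫⁻ x, ENNReal.ofReal (A (|f x| / lam.toReal)) ∂μ ≤ 1}

/-- `A` is a Young function: continuous, convex, increasing on `[0,∞)`,
`A 0 = 0` and `A t / t → ∞`. -/
def IsYoung (A : ℝ → ℝ) : Prop :=
  ContinuousOn A (Set.Ici 0) ∧ ConvexOn ℝ (Set.Ici 0) A ∧ MonotoneOn A (Set.Ici 0) ∧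
    A 0 = 0 ∧ Tendsto (fun t => A t / t) atTop atTop

theorem stmt1 {X : Type*} [MeasurableSpace X] (μ : Measure X) (f : X → ℝ)
    (hf : Measurable f) (p q₀ : ℝ) (hp : 1 ≤ p) (hq₀ : 0 < q₀)
    (hfin : luxNorm μ (Bpq p q₀) f < ∞) :
    eLpNormEssSup f μ ≤ Filter.liminf (fun q : ℝ => luxNorm μ (Bpq p q) f) atTop := by
  by_contra hcon
  push_neg at hcon
  obtain ⟨c', hl1, hl2⟩ := exists_between hcon
  obtain ⟨c, hc1, hc2⟩ := exists_between hl2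
  have hc'0 : 0 < c' := (zero_le).trans_lt hl1
  have hcne : c ≠ ⊤ := (hc2.trans_le le_top).ne
  have hc'ne : c' ≠ ⊤ := (hc1.trans_le (le_top)).ne
  have hc0 : 0 < c := hc'0.trans hc1
  set E : Set X := {x | c.toReal < |f x|} with hEdef
  have hEm : MeasurableSet E := measurableSet_lt measurable_const hf.abs
  have hμE : μ E ≠ 0 := by
    intro h0
    have hb : ∀ᵐ x ∂μ, ‖f x‖ ≤ c.toReal := by
      rw [ae_iff]
      convert h0 using 2
      ext x
      simp [hEdef, Real.norm_eq_abs, not_le]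
    have hle := eLpNormEssSup_le_of_ae_bound hb
    rw [ENNReal.ofReal_toReal hcne] at hle
    exact absurd hc2 hle.not_gt
  have hc't : 0 < c'.toReal := ENNReal.toReal_pos hc'0.ne' hc'ne
  have hct : 0 < c.toReal := ENNReal.toReal_pos hc0.ne' hcne
  set r : ℝ := c.toReal / c'.toReal with hrdef
  have hr1 : 1 < r :=
    (one_lt_div hc't).2 ((ENNReal.toReal_lt_toReal hc'ne hcne).2 hc1)
  set M : ℝ := Real.log (e0 + r) with hMdef
  have hM1 : 1 < M := by
    have h1 : Real.exp 1 < e0 + r := by unfold e0; linarith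
    calc (1:ℝ) = Real.log (Real.exp 1) := (Real.log_exp 1).symm
      _ < M := Real.log_lt_log (Real.exp_pos 1) h1
  have hM0 : 0 < M := lt_trans zero_lt_one hM1
  have hMtend : Tendsto (fun q : ℝ => M ^ q) atTop atTop := by
    have hlogM : 0 < Real.log M := Real.log_pos hM1
    have h1 : Tendsto (fun q : ℝ => q * Real.log M) atTop atTop :=
      Tendsto.atTop_mul_const hlogM tendsto_id
    have h2 := Real.tendsto_exp_atTop.comp h1
    refine h2.congr fun q => ?_
    simp [Real.rpow_def_of_pos hM0, mul_comm]
  have htop : Tendsto (fun q : ℝ => ENNReal.ofReal (M ^ q) * μ E) atTop (𝓝 ⊤) := by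
    have h1 := ENNReal.tendsto_ofReal_atTop.comp hMtend
    have h2 := ENNReal.Tendsto.mul_const (b := μ E) h1 (Or.inl (by simp : (⊤ : ℝ≥0∞) ≠ 0))
    rwa [ENNReal.top_mul hμE] at h2
  have hev : ∀ᶠ q : ℝ in atTop, 1 < ENNReal.ofReal (M ^ q) * μ E :=
    htop.eventually (eventually_gt_nhds (by simp : (1:ℝ≥0∞) < ⊤))
  have key : ∀ᶠ q : ℝ in atTop, c' ≤ luxNorm μ (Bpq p q) f := by
    filter_upwards [hev, eventually_ge_atTop (0:ℝ)] with q hq hq0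
    refine le_sInf ?_
    rintro lam ⟨hlam0, hlamtop, hint⟩
    by_contra hlt
    push_neg at hlt
    have hlamt : 0 < lam.toReal := ENNReal.toReal_pos hlam0.ne' hlamtop
    have hlamlt : lam.toReal < c'.toReal := (ENNReal.toReal_lt_toReal hlamtop hc'ne).2 hlt
    have hpt : ∀ x ∈ E, ENNReal.ofReal (M ^ q) ≤
        ENNReal.ofReal (Bpq p q (|f x| / lam.toReal)) := by
      intro x hx
      apply ENNReal.ofReal_le_ofReal
      have hxE : c.toReal < |f x| := hx
      have ht : r < |f x| / lam.toReal :=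
        div_lt_div₀ hxE hlamlt.le (abs_nonneg _) hlamt
      have ht1 : 1 < |f x| / lam.toReal := hr1.trans ht
      have h1 : (1:ℝ) ≤ (|f x| / lam.toReal) ^ p :=
        Real.one_le_rpow ht1.le (by linarith)
      have h2 : M ^ q ≤ Real.log (e0 + |f x| / lam.toReal) ^ q := by
        apply Real.rpow_le_rpow hM0.le _ hq0
        apply Real.log_le_log
          (by unfold e0; linarith [Real.one_le_exp (zero_le_one : (0:ℝ) ≤ 1)])
        linarith
      calc M ^ q = 1 * M ^ q := (one_mul _).symm
        _ ≤ (|f x| / lam.toReal) ^ p * Real.log (e0 + |f x| / lam.toReal) ^ q :=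
          mul_le_mul h1 h2 (Real.rpow_nonneg hM0.le q) (le_trans zero_le_one h1)
    have hlow : ENNReal.ofReal (M ^ q) * μ E ≤
        ∫⁻ x, ENNReal.ofReal (Bpq p q (|f x| / lam.toReal)) ∂μ := by
      calc ENNReal.ofReal (M ^ q) * μ E
          = ∫⁻ _ in E, ENNReal.ofReal (M ^ q) ∂μ := (setLIntegral_const E _).symm
        _ = ∫⁻ x, E.indicator (fun _ => ENNReal.ofReal (M ^ q)) x ∂μ :=
            (lintegral_indicator hEm _).symm
        _ ≤ _ := by
            refine lintegral_mono fun x => ?_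
            by_cases hx : x ∈ E
            · simpa [Set.indicator_of_mem hx] using hpt x hx
            · simp [Set.indicator_of_notMem hx]
    exact absurd (lt_of_lt_of_le hq hlow) (not_lt_of_ge hint)
  have hfinal : c' ≤ Filter.liminf (fun q : ℝ => luxNorm μ (Bpq p q) f) atTop :=
    le_liminf_of_le (by isBoundedDefault) key
  exact absurd hl1 hfinal.not_gt
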